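/- Let UT_n carry an elementary G-grading given by η = (g_1,…,g_{n−1}) ∈ G^{n−1}. If UT_n admits a graded involution, then the support of the grading is commutative; more precisely, g_i g_j = g_j g_i for all i, j. -/

import Mathlib

open Matrix

/-- A matrix is homogeneous of degree `h` in the elementary grading with degree
function `d` if it is upper triangular and all of its nonzero entries sit in
positions of degree `h`. -/
def IsHomD {n : ℕ} {K : Type*} [Field K] {G : Type*} [Group G]
    (d : Fin n → Fin n → G) (h : G) (x : Matrix (Fin n) (Fin n) K) : Prop :=
  (∀ i j : Fin n, j < i → x i j = 0) ∧ ∀ i j : Fin n, x i j ≠ 0 → d i j = h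

/-- `x` vanishes below the `m`-th superdiagonal (this is `J^m` for the radical `J`). -/
def InJ {n : ℕ} {K : Type*} [Field K] (m : ℕ) (x : Matrix (Fin n) (Fin n) K) : Prop :=
  ∀ i j : Fin n, (j : ℕ) < (i : ℕ) + m → x i j = 0

lemma InJ_mono {n : ℕ} {K : Type*} [Field K] {m m' : ℕ} (h : m' ≤ m)
    {x : Matrix (Fin n) (Fin n) K} (hx : InJ m x) : InJ m' x :=
  fun i j hj => hx i j (by omega)

lemma InJ_mul {n : ℕ} {K : Type*} [Field K] {p q : ℕ} {x y : Matrix (Fin n) (Fin n) K}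
    (hx : InJ p x) (hy : InJ q y) : InJ (p + q) (x * y) := by
  intro a b hb
  rw [Matrix.mul_apply]
  apply Finset.sum_eq_zero
  intro c _
  rcases lt_or_ge (c : ℕ) ((a : ℕ) + p) with h | h
  · rw [hx a c h, zero_mul]
  · rw [hy c b (by omega), mul_zero]

lemma diag_mul_ut {n : ℕ} {K : Type*} [Field K] {x y : Matrix (Fin n) (Fin n) K}
    (hx : InJ 0 x) (hy : InJ 0 y) (a : Fin n) : (x * y) a a = x a a * y a a := by
  rw [Matrix.mul_apply]
  apply Finset.sum_eq_single
  · intro c _ hc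
    rcases lt_or_gt_of_ne (fun h => hc (Fin.ext h) : (c : ℕ) ≠ (a : ℕ)) with h | h
    · rw [hx a c (by omega), zero_mul]
    · rw [hy c a (by omega), mul_zero]
  · intro h; exact absurd (Finset.mem_univ a) h

lemma one_eq_sum_std {n : ℕ} {K : Type*} [Field K] :
    (1 : Matrix (Fin n) (Fin n) K) = ∑ p : Fin n, single p p 1 := by
  ext a b
  rw [Matrix.sum_apply]
  by_cases h : a = b
  · subst h
    rw [Matrix.one_apply_eq]
    have h2 : ∑ c : Fin n, Matrix.single c c (1:K) a a
        = Matrix.single a a (1:K) a a :=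
      Finset.sum_eq_single a (fun c _ hc => single_apply_of_ne _ _ _ _ _ (by tauto))
        (fun h => absurd (Finset.mem_univ a) h)
    rw [h2, single_apply_same]
  · rw [Matrix.one_apply_ne h]
    symm
    apply Finset.sum_eq_zero
    intro c _
    exact single_apply_of_ne _ _ _ _ _ (by rintro ⟨rfl, rfl⟩; exact h rfl)

lemma ut_one {n : ℕ} {K : Type*} [Field K] : InJ 0 (1 : Matrix (Fin n) (Fin n) K) := by
  intro a b h
  exact Matrix.one_apply_ne (by intro hh; subst hh; omega)

/-- The purely group-theoretic part: from the multiplicativity of `d` and the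
reversal symmetry `d (rev j) (rev i) = d i j` one deduces that the generators
pairwise commute. -/
lemma group_part {n : ℕ} {G : Type*} [Group G] (d : Fin n → Fin n → G)
    (hdm : ∀ i j k : Fin n, i ≤ j → j ≤ k → d i j * d j k = d i k)
    (hrev : ∀ p q p' q' : Fin n, p ≤ q → ((p' : ℕ) = n - 1 - (q : ℕ)) →
      ((q' : ℕ) = n - 1 - (p : ℕ)) → d p' q' = d p q) :
    ∀ i j i' j' : Fin n, (j : ℕ) = (i : ℕ) + 1 → (j' : ℕ) = (i' : ℕ) + 1 →
      d i j * d i' j' = d i' j' * d i j := by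
  have hd_one : ∀ p : Fin n, d p p = 1 := by
    intro p
    have := hdm p p p le_rfl le_rfl
    exact mul_eq_right.mp this
  -- reverse recursion : d p r = d q r * d p q whenever r = q + 1, p ≤ q
  have hS2 : ∀ p q r : Fin n, p ≤ q → ((r : ℕ) = (q : ℕ) + 1) → d p r = d q r * d p q := by
    intro p q r hpq hr
    have hrn := r.isLt
    have hpq' : (p : ℕ) ≤ (q : ℕ) := hpq
    obtain ⟨p', hp'⟩ : ∃ p' : Fin n, (p' : ℕ) = n - 1 - (r : ℕ) := ⟨⟨_, by omega⟩, rfl⟩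
    obtain ⟨m', hm'⟩ : ∃ m' : Fin n, (m' : ℕ) = n - 1 - (q : ℕ) := ⟨⟨_, by omega⟩, rfl⟩
    obtain ⟨q'', hq''⟩ : ∃ q'' : Fin n, (q'' : ℕ) = n - 1 - (p : ℕ) := ⟨⟨_, by omega⟩, rfl⟩
    have h1 : d p' q'' = d p r := hrev p r p' q'' (Fin.le_def.mpr (by omega)) hp' hq''
    have h2 : d p' m' * d m' q'' = d p' q'' :=
      hdm p' m' q'' (Fin.le_def.mpr (by omega)) (Fin.le_def.mpr (by omega))
    have h3 : d m' q'' = d p q := hrev p q m' q'' hpq hm' hq''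
    have h4 : d p' m' = d q r := hrev q r p' m' (Fin.le_def.mpr (by omega)) hp' (by omega)
    rw [← h1, ← h2, h3, h4]
  -- commuting with a whole interval
  have hS4 : ∀ (m : ℕ) (x : G) (p q : Fin n), (q : ℕ) = (p : ℕ) + m →
      (∀ k k' : Fin n, (p : ℕ) ≤ (k : ℕ) → (k' : ℕ) = (k : ℕ) + 1 → (k' : ℕ) ≤ (q : ℕ) →
        x * d k k' = d k k' * x) →
      x * d p q = d p q * x := by
    intro m
    induction m with
    | zero =>
      intro x p q hq _
      have : q = p := Fin.ext (by omega)
      subst this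
      rw [hd_one, mul_one, one_mul]
    | succ m ih =>
      intro x p q hq hcomm
      have hqn := q.isLt
      obtain ⟨q0, hq0⟩ : ∃ q0 : Fin n, (q0 : ℕ) = (p : ℕ) + m := ⟨⟨_, by omega⟩, rfl⟩
      have hsplit : d p q0 * d q0 q = d p q :=
        hdm p q0 q (Fin.le_def.mpr (by omega)) (Fin.le_def.mpr (by omega))
      have h1 : x * d p q0 = d p q0 * x := by
        apply ih x p q0 (by omega)
        intro k k' hk hk' hk'q
        exact hcomm k k' hk hk' (by omega)
      have h2 : x * d q0 q = d q0 q * x :=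
        hcomm q0 q (by omega) (by omega) le_rfl
      rw [← hsplit, ← mul_assoc, h1, mul_assoc, h2, ← mul_assoc]
  -- main commuting statement by strong induction on the distance
  have hS5 : ∀ (m : ℕ) (p q p1 q1 : Fin n), (q : ℕ) = (p : ℕ) + m →
      ((p1 : ℕ) = (p : ℕ) + 1) → ((q1 : ℕ) = (q : ℕ) + 1) →
      d p p1 * d q q1 = d q q1 * d p p1 := by
    intro m
    induction m using Nat.strong_induction_on with
    | _ m ih =>
      intro p q p1 q1 hq hp1 hq1
      match m, hq with
      | 0, hq =>
        have hqp : q = p := Fin.ext (by omega)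
        have hq1p1 : q1 = p1 := Fin.ext (by omega)
        rw [hqp, hq1p1]
      | (m+1), hq =>
        have hq1n := q1.isLt
        have hp1q : p1 ≤ q := Fin.le_def.mpr (by omega)
        -- forward expansion of d p q1
        have hf : d p q1 = d p p1 * (d p1 q * d q q1) := by
          rw [hdm p1 q q1 hp1q (Fin.le_def.mpr (by omega)),
            hdm p p1 q1 (Fin.le_def.mpr (by omega)) (Fin.le_def.mpr (by omega))]
        -- reverse expansion of d p q1
        have hr : d p q1 = d q q1 * (d p p1 * d p1 q) := by
          rw [hdm p p1 q (Fin.le_def.mpr (by omega)) hp1q]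
          exact hS2 p q q1 (Fin.le_def.mpr (by omega)) hq1
        -- d q q1 commutes with d p1 q
        have hc : d q q1 * d p1 q = d p1 q * d q q1 := by
          apply hS4 m (d q q1) p1 q (by omega)
          intro k k' hk hk' hk'q
          exact (ih ((q : ℕ) - (k : ℕ)) (by omega) k q k' q1 (by omega) hk' hq1).symm
        have : d p p1 * (d p1 q * d q q1) = d q q1 * (d p p1 * d p1 q) := by
          rw [← hf, hr]
        rw [← hc, ← mul_assoc, ← mul_assoc] at this
        exact mul_right_cancel this
  intro i j i' j' hj hj'
  rcases le_or_gt (i : ℕ) (i' : ℕ) with h | h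
  · exact hS5 ((i' : ℕ) - (i : ℕ)) i i' j j' (by omega) hj hj'
  · exact (hS5 ((i : ℕ) - (i' : ℕ)) i' i j' j (by omega) hj' hj).symm

/-- if the upper triangular matrices with the elementary `G`-grading
with degree function `d` admit a graded linear involution, then the generators
`η i = d i (i+1)` of the support pairwise commute. -/
theorem graded_involution_implies_commutative_support {n : ℕ} {K : Type*} [Field K]
    {G : Type*} [Group G] (hchar : (2 : K) ≠ 0)
    (d : Fin n → Fin n → G)
    (hdm : ∀ i j k : Fin n, i ≤ j → j ≤ k → d i j * d j k = d i k)
    (star : Matrix (Fin n) (Fin n) K → Matrix (Fin n) (Fin n) K)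
    (hlin : IsLinearMap K star)
    (hinv : ∀ x : Matrix (Fin n) (Fin n) K, (∀ i j : Fin n, j < i → x i j = 0) →
      star (star x) = x)
    (hanti : ∀ x y : Matrix (Fin n) (Fin n) K,
      (∀ i j : Fin n, j < i → x i j = 0) → (∀ i j : Fin n, j < i → y i j = 0) →
      star (x * y) = star y * star x)
    (hgr : ∀ (h : G) (x : Matrix (Fin n) (Fin n) K), IsHomD d h x → IsHomD d h (star x)) :
    ∀ i j i' j' : Fin n, (j : ℕ) = (i : ℕ) + 1 → (j' : ℕ) = (i' : ℕ) + 1 →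
      d i j * d i' j' = d i' j' * d i j := by
  classical
  -- conversion between `InJ 0` and the `<`-based upper-triangularity
  have toUT : ∀ x : Matrix (Fin n) (Fin n) K, InJ 0 x → ∀ a b : Fin n, b < a → x a b = 0 :=
    fun x hx a b h => hx a b (by have := Fin.lt_def.mp h; omega)
  have ofUT : ∀ x : Matrix (Fin n) (Fin n) K, (∀ a b : Fin n, b < a → x a b = 0) → InJ 0 x :=
    fun x hx a b h => hx a b (Fin.lt_def.mpr (by omega))
  -- matrix units are homogeneous
  have hEhom : ∀ p q : Fin n, p ≤ q → IsHomD d (d p q) (single p q (1 : K)) := by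
    intro p q hpq
    constructor
    · intro a b hba
      apply single_apply_of_ne
      rintro ⟨rfl, rfl⟩
      exact absurd hpq (not_le.mpr hba)
    · intro a b hab
      by_cases h : p = a ∧ q = b
      · rcases h with ⟨rfl, rfl⟩; rfl
      · exact absurd (single_apply_of_ne _ _ _ _ _ h) hab
  have hEut : ∀ p q : Fin n, p ≤ q → ∀ a b : Fin n, b < a → single p q (1 : K) a b = 0 :=
    fun p q hpq => (hEhom p q hpq).1
  -- star of a matrix unit E_{p,p+m} lies in J^m
  have hstarE : ∀ (m : ℕ) (p q : Fin n), (q : ℕ) = (p : ℕ) + m →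
      InJ m (star (single p q 1)) := by
    intro m
    induction m with
    | zero =>
      intro p q h
      have : q = p := Fin.ext (by omega)
      subst this
      exact ofUT _ (hgr (d q q) _ (hEhom q q le_rfl)).1
    | succ m ih =>
      intro p q h
      have hq := q.isLt
      obtain ⟨p1, hp1⟩ : ∃ p1 : Fin n, (p1 : ℕ) = (p : ℕ) + 1 := ⟨⟨_, by omega⟩, rfl⟩
      have hpp1 : p ≤ p1 := Fin.le_def.mpr (by omega)
      have hp1q : p1 ≤ q := Fin.le_def.mpr (by omega)
      have hmul : single p q (1 : K) = single p p1 1 * single p1 q 1 := by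
        rw [single_mul_single_same, one_mul]
      have hsp : star (single p q (1 : K))
          = star (single p1 q 1) * star (single p p1 1) := by
        rw [hmul, hanti _ _ (hEut p p1 hpp1) (hEut p1 q hp1q)]
      have h1 : InJ m (star (single p1 q (1 : K))) := ih p1 q (by omega)
      have h2 : InJ 1 (star (single p p1 (1 : K))) := by
        have hsUT : InJ 0 (star (single p p1 (1 : K))) :=
          ofUT _ (hgr (d p p1) _ (hEhom p p1 hpp1)).1
        have hne : p1 ≠ p := by intro hc; rw [hc] at hp1; omega
        have hss : star (single p p1 (1 : K)) * star (single p p1 1) = 0 := by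
          rw [← hanti _ _ (hEut p p1 hpp1) (hEut p p1 hpp1),
            single_mul_single_of_ne (h := hne), hlin.map_zero]
        intro a b hab
        rcases Nat.lt_or_ge (b : ℕ) (a : ℕ) with hba | hba
        · exact hsUT a b (by omega)
        · have hbe : b = a := Fin.ext (by omega)
          subst hbe
          have := congrFun (congrFun hss b) b
          rw [diag_mul_ut hsUT hsUT, Matrix.zero_apply] at this
          exact mul_self_eq_zero.mp this
      rw [hsp]
      exact InJ_mul h1 h2
  -- star as a linear map, and star of arbitrary decompositions
  have hstar_smul : ∀ (c : K) (x : Matrix (Fin n) (Fin n) K), star (c • x) = c • star x :=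
    fun c x => hlin.map_smul c x
  have hstar_sum : ∀ x : Matrix (Fin n) (Fin n) K,
      star x = ∑ p : Fin n, ∑ q : Fin n, star (single p q (x p q)) := by
    intro x
    have hS : star = ⇑(IsLinearMap.mk' star hlin) := rfl
    conv_lhs => rw [matrix_eq_sum_single x]
    rw [hS, map_sum]
    refine Finset.sum_congr rfl fun p _ => ?_
    rw [map_sum]
  -- star preserves each InJ s
  have hstarInJ : ∀ (s : ℕ) (x : Matrix (Fin n) (Fin n) K), InJ s x → InJ s (star x) := by
    intro s x hx a b hab
    rw [hstar_sum x, Matrix.sum_apply]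
    apply Finset.sum_eq_zero
    intro p _
    rw [Matrix.sum_apply]
    apply Finset.sum_eq_zero
    intro q _
    by_cases h : (q : ℕ) < (p : ℕ) + s
    · rw [hx p q h, single_zero, hlin.map_zero, Matrix.zero_apply]
    · have h1 : InJ s (star (single p q 1)) :=
        InJ_mono (by omega) (hstarE ((q : ℕ) - (p : ℕ)) p q (by omega))
      have h2 : single p q (x p q) = x p q • single p q 1 := by
        rw [smul_single, smul_eq_mul, mul_one]
      rw [h2, hstar_smul, Matrix.smul_apply, h1 a b hab, smul_zero]
  -- star 1 = 1
  have hstar1 : star 1 = 1 := by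
    have h0 := hanti 1 (star 1) (toUT _ ut_one) (toUT _ (hstarInJ 0 1 ut_one))
    rw [one_mul, hinv 1 (toUT _ ut_one), one_mul] at h0
    exact h0.symm
  -- the idempotents f p = star (E p p)
  set f : Fin n → Matrix (Fin n) (Fin n) K := fun p => star (single p p 1) with hf
  have hfUT : ∀ p, InJ 0 (f p) := fun p => ofUT _ (hgr (d p p) _ (hEhom p p le_rfl)).1
  have hf_mul : ∀ p q : Fin n, f p * f q = if q = p then f p else 0 := by
    intro p q
    have h1 : f p * f q = star (single q q 1 * single p p 1) :=
      (hanti _ _ (hEut q q le_rfl) (hEut p p le_rfl)).symm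
    by_cases h : q = p
    · subst h; rw [h1, single_mul_single_same, one_mul, if_pos rfl]
    · rw [h1, single_mul_single_of_ne (h := h), hlin.map_zero, if_neg h]
  have hf_sum : (∑ p, f p) = 1 := by
    have h1 : (∑ p, f p) = star (∑ p : Fin n, single p p 1) := by
      rw [show star = ⇑(IsLinearMap.mk' star hlin) from rfl, map_sum]
      rfl
    rw [h1, ← one_eq_sum_std, hstar1]
  have hf_idem : ∀ p, f p * f p = f p := by intro p; rw [hf_mul, if_pos rfl]
  have hDorth : ∀ p q a, q ≠ p → f p a a * f q a a = 0 := by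
    intro p q a hpq
    rw [← diag_mul_ut (hfUT p) (hfUT q), hf_mul, if_neg hpq, Matrix.zero_apply]
  have hDsum : ∀ a, (∑ p, f p a a) = 1 := by
    intro a
    have h1 := congrFun (congrFun hf_sum a) a
    rw [Matrix.sum_apply, Matrix.one_apply_eq] at h1
    exact h1
  have hf_diag_ne : ∀ p, ∃ a, f p a a ≠ 0 := by
    intro p
    by_contra hcon
    push_neg at hcon
    have h1 : InJ 1 (f p) := by
      intro a b hab
      rcases Nat.lt_or_ge (b : ℕ) (a : ℕ) with hba | hba
      · exact hfUT p a b (by omega)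
      · have hba' : b = a := Fin.ext (by omega)
        subst hba'
        exact hcon b
    have h2 : ∀ k, InJ k (f p) := by
      intro k
      induction k with
      | zero => exact hfUT p
      | succ k ihk => rw [← hf_idem p]; exact InJ_mul ihk h1
    have h3 : f p = 0 := by
      ext a b
      rw [Matrix.zero_apply]
      exact h2 n a b (by have := b.isLt; omega)
    have h4 : star (f p) = single p p 1 := hinv _ (hEut p p le_rfl)
    rw [h3, hlin.map_zero] at h4
    have h5 := congrFun (congrFun h4 p) p
    rw [Matrix.zero_apply, single_apply_same] at h5
    exact one_ne_zero h5.symm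
  have hex : ∀ a : Fin n, ∃ p, f p a a ≠ 0 := by
    intro a
    by_contra hcon
    push_neg at hcon
    have h1 := hDsum a
    rw [Finset.sum_eq_zero (fun p _ => hcon p)] at h1
    exact one_ne_zero h1.symm
  let σ : Fin n → Fin n := fun a => Classical.choose (hex a)
  have hσ : ∀ a, f (σ a) a a ≠ 0 := fun a => Classical.choose_spec (hex a)
  have huniq : ∀ a p, f p a a ≠ 0 → σ a = p := by
    intro a p hp
    by_contra hne
    rcases mul_eq_zero.mp (hDorth p (σ a) a hne) with h | h
    · exact hp h
    · exact hσ a h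
  have hσsurj : Function.Surjective σ := by
    intro p
    obtain ⟨a, ha⟩ := hf_diag_ne p
    exact ⟨a, huniq a p ha⟩
  have hσinj : Function.Injective σ := Finite.injective_iff_surjective.mpr hσsurj
  -- the key leading-entry analysis
  have hkey : ∀ p q : Fin n, p ≤ q → ∃ a b : Fin n,
      (b : ℕ) = (a : ℕ) + ((q : ℕ) - (p : ℕ)) ∧ σ a = q ∧ σ b = p ∧ d a b = d p q := by
    intro p q hpq
    have hpq' : (p : ℕ) ≤ (q : ℕ) := hpq
    set m := (q : ℕ) - (p : ℕ) with hm
    set t := star (single p q 1) with ht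
    have htInJ : InJ m t := hstarE m p q (by omega)
    have htnot : ¬ InJ (m + 1) t := by
      intro hc
      have h1 : InJ (m + 1) (star t) := hstarInJ (m + 1) t hc
      rw [hinv _ (hEut p q hpq)] at h1
      have h2 := h1 p q (by omega)
      rw [single_apply_same] at h2
      exact one_ne_zero h2
    obtain ⟨a, b, hab, htab⟩ : ∃ a b : Fin n, (b : ℕ) < (a : ℕ) + (m + 1) ∧ t a b ≠ 0 := by
      by_contra hcon
      push_neg at hcon
      exact htnot (fun a b hb => hcon a b hb)
    have hbval : (b : ℕ) = (a : ℕ) + m := by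
      have h1 : ¬ (b : ℕ) < (a : ℕ) + m := fun hlt => htab (htInJ a b hlt)
      omega
    have h1 : t = f q * t := by
      have e0 : single p q (1 : K) = single p q 1 * single q q 1 := by
        rw [single_mul_single_same, mul_one]
      calc t = star (single p q 1 * single q q 1) := by rw [← e0]
        _ = f q * t := hanti _ _ (hEut p q hpq) (hEut q q le_rfl)
    have h2 : t = t * f p := by
      have e0 : single p q (1 : K) = single p p 1 * single p q 1 := by
        rw [single_mul_single_same, one_mul]
      calc t = star (single p p 1 * single p q 1) := by rw [← e0]
        _ = t * f p := hanti _ _ (hEut p p le_rfl) (hEut p q hpq)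
    have e1 : t a b = f q a a * t a b := by
      conv_lhs => rw [h1]
      rw [Matrix.mul_apply]
      apply Finset.sum_eq_single
      · intro c _ hc
        rcases lt_or_gt_of_ne (fun hcc => hc (Fin.ext hcc) : (c : ℕ) ≠ (a : ℕ)) with hlt | hgt
        · rw [hfUT q a c (by omega), zero_mul]
        · rw [htInJ c b (by omega), mul_zero]
      · intro hcon; exact absurd (Finset.mem_univ a) hcon
    have e2 : t a b = t a b * f p b b := by
      conv_lhs => rw [h2]
      rw [Matrix.mul_apply]
      apply Finset.sum_eq_single
      · intro c _ hc
        rcases lt_or_gt_of_ne (fun hcc => hc (Fin.ext hcc) : (c : ℕ) ≠ (b : ℕ)) with hlt | hgt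
        · rw [htInJ a c (by omega), zero_mul]
        · rw [hfUT p c b (by omega), mul_zero]
      · intro hcon; exact absurd (Finset.mem_univ b) hcon
    have hσa : σ a = q := huniq a q (fun h0 => htab (by rw [e1, h0, zero_mul]))
    have hσb : σ b = p := huniq b p (fun h0 => htab (by rw [e2, h0, mul_zero]))
    have hdeg : d a b = d p q := (hgr (d p q) _ (hEhom p q hpq)).2 a b htab
    exact ⟨a, b, hbval, hσa, hσb, hdeg⟩
  -- now determine σ explicitly and conclude
  intro i j i' j' hj hj'
  have hn2 : 2 ≤ n := by have := j.isLt; omega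
  have hstep : ∀ p q : Fin n, p ≤ q → ∀ aq bp : Fin n, σ aq = q → σ bp = p →
      (bp : ℕ) = (aq : ℕ) + ((q : ℕ) - (p : ℕ)) := by
    intro p q hpq aq bp haq hbp
    obtain ⟨a, b, hab, hσa, hσb, _⟩ := hkey p q hpq
    have h1 : a = aq := hσinj (by rw [hσa, haq])
    have h2 : b = bp := hσinj (by rw [hσb, hbp])
    rw [← h1, ← h2]
    exact hab
  obtain ⟨ρ, hρ⟩ : ∃ ρ : Fin n → Fin n, ∀ k, σ (ρ k) = k :=
    ⟨fun k => Classical.choose (hσsurj k), fun k => Classical.choose_spec (hσsurj k)⟩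
  obtain ⟨z, hzv⟩ : ∃ z : Fin n, (z : ℕ) = 0 := ⟨⟨0, by omega⟩, rfl⟩
  obtain ⟨w, hwv⟩ : ∃ w : Fin n, (w : ℕ) = n - 1 := ⟨⟨n - 1, by omega⟩, rfl⟩
  have hz : ∀ k : Fin n, (ρ z : ℕ) = (ρ k : ℕ) + (k : ℕ) := by
    intro k
    have h1 := hstep z k (Fin.le_def.mpr (by omega)) (ρ k) (ρ z) (hρ k) (hρ z)
    omega
  have hρtop : (ρ z : ℕ) = n - 1 := by
    have h1 := hz w
    have h2 := (ρ z).isLt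
    omega
  have hρval : ∀ k : Fin n, (ρ k : ℕ) = n - 1 - (k : ℕ) := by
    intro k
    have h1 := hz k
    omega
  have hrev : ∀ p q p' q' : Fin n, p ≤ q → ((p' : ℕ) = n - 1 - (q : ℕ)) →
      ((q' : ℕ) = n - 1 - (p : ℕ)) → d p' q' = d p q := by
    intro p q p' q' hpq hp' hq'
    obtain ⟨a, b, hab, hσa, hσb, hdeg⟩ := hkey p q hpq
    have h1 : a = ρ q := hσinj (by rw [hσa, hρ])
    have h2 : b = ρ p := hσinj (by rw [hσb, hρ])
    have ha' : p' = a := Fin.ext (by rw [hp', h1, hρval])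
    have hb' : q' = b := Fin.ext (by rw [hq', h2, hρval])
    rw [ha', hb', hdeg]
  exact group_part d hdm hrev i j i' j' hj hj'
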